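/- Let (e_n)_{n≥0} be an orthonormal basis of L²(0,1) consisting of functions e_n(x) = γ_n sin(r_n x) with γ_n = 2√(r_n/(2r_n − sin 2r_n)) and r_n as above, and let (λ_n) be the associated eigenvalues with λ_n ∼ −a n² π². If f ∈ L²(0,1) satisfies ∑_{n≥0} |λ_n|² |⟨f, e_n⟩|² < ∞, then the series ∑_{n≥0} ⟨f, e_n⟩ e_n(1) converges absolutely and equals f(1) (where f has a continuous representative). -/

import Mathlib

open Real Set Filter MeasureTheory

theorem trace_series_expansion
    (θ : ℝ) (hθ : θ ∈ Ioo 0 (π / 2)) (a : ℝ) (ha : 0 < a)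
    (r : ℕ → ℝ)
    (hr : ∀ n : ℕ, r n ∈ Ioo (n * π) ((n + 1) * π) ∧
      r n * (Real.cos (r n) / Real.sin (r n)) = -(Real.cos θ / Real.sin θ))
    (lam : ℕ → ℝ)
    (hlam : Tendsto (fun n : ℕ => lam n / (-(a * (n : ℝ) ^ 2 * π ^ 2))) atTop (nhds 1))
    (e : HilbertBasis ℕ ℝ (Lp ℝ 2 (volume.restrict (Ioo (0:ℝ) 1))))
    (he : ∀ n : ℕ,
      (e n : Lp ℝ 2 (volume.restrict (Ioo (0:ℝ) 1)))
        =ᵐ[volume.restrict (Ioo (0:ℝ) 1)]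
      fun x => 2 * Real.sqrt (r n / (2 * r n - Real.sin (2 * r n))) * Real.sin (r n * x))
    (f : Lp ℝ 2 (volume.restrict (Ioo (0:ℝ) 1)))
    (hf : Summable (fun n : ℕ =>
      |lam n| ^ 2 * (inner (𝕜 := ℝ) f (e n : Lp ℝ 2 (volume.restrict (Ioo (0:ℝ) 1)))) ^ 2))
    (F : ℝ → ℝ) (hF : ContinuousOn F (Icc 0 1))
    (hrep : (f : ℝ → ℝ) =ᵐ[volume.restrict (Ioo (0:ℝ) 1)] F) :
    Summable (fun n : ℕ =>
      |inner (𝕜 := ℝ) f (e n : Lp ℝ 2 (volume.restrict (Ioo (0:ℝ) 1)))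
        * (2 * Real.sqrt (r n / (2 * r n - Real.sin (2 * r n))) * Real.sin (r n * 1))|) ∧
    ∑' n : ℕ,
      inner (𝕜 := ℝ) f (e n : Lp ℝ 2 (volume.restrict (Ioo (0:ℝ) 1)))
        * (2 * Real.sqrt (r n / (2 * r n - Real.sin (2 * r n))) * Real.sin (r n * 1))
      = F 1 := by
  classical
  have h2 : (volume (Ioo (0:ℝ) 1)) = 1 := by simp
  haveI : IsFiniteMeasure (volume.restrict (Ioo (0:ℝ) 1)) := ⟨by
    rw [Measure.restrict_apply_univ, h2]; exact ENNReal.one_lt_top⟩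
  set c : ℕ → ℝ := fun n =>
    inner (𝕜 := ℝ) f (e n : Lp ℝ 2 (volume.restrict (Ioo (0:ℝ) 1))) with hcdef
  set γ : ℕ → ℝ := fun n => 2 * Real.sqrt (r n / (2 * r n - Real.sin (2 * r n))) with hγdef
  have hγ0 : ∀ n, 0 ≤ γ n := fun n => by
    rw [hγdef]; positivity
  -- uniform bound on γ
  set C : ℝ := max (γ 0) 2 with hCdef
  have hC0 : (0:ℝ) ≤ C := le_trans (by norm_num) (le_max_right _ _)
  have hCγ : ∀ n, γ n ≤ C := by
    intro n
    match n with
    | 0 => exact le_max_left _ _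
    | (m+1) =>
      refine le_trans ?_ (le_max_right _ _)
      have hπ : π ≤ r (m+1) := by
        have h1 := (hr (m+1)).1.1
        have h2 : π ≤ ((m+1:ℕ):ℝ) * π := by
          have : (1:ℝ) ≤ ((m+1:ℕ):ℝ) := by
            exact_mod_cast Nat.one_le_iff_ne_zero.mpr (Nat.succ_ne_zero m)
          nlinarith [pi_pos]
        linarith
      have h1 : (1:ℝ) ≤ r (m+1) := le_trans (by linarith [pi_gt_three]) hπ
      have hsin : Real.sin (2 * r (m+1)) ≤ 1 := Real.sin_le_one _
      have hpos : 0 < 2 * r (m+1) - Real.sin (2 * r (m+1)) := by linarith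
      have hdiv : r (m+1) / (2 * r (m+1) - Real.sin (2 * r (m+1))) ≤ 1 :=
        (div_le_one hpos).mpr (by linarith)
      have hs : Real.sqrt (r (m+1) / (2 * r (m+1) - Real.sin (2 * r (m+1)))) ≤ 1 :=
        Real.sqrt_le_one.mpr hdiv
      rw [hγdef]
      calc 2 * Real.sqrt (r (m+1) / (2 * r (m+1) - Real.sin (2 * r (m+1)))) ≤ 2 * 1 := by
            nlinarith
        _ = 2 := by norm_num
  -- summability of |c n|
  have hsum_c : Summable (fun n => |c n|) := by
    obtain ⟨N, hN⟩ := Metric.tendsto_atTop.mp hlam (1/2) (by norm_num)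
    have hπ0 := pi_pos
    have hap : (0:ℝ) < a * π ^ 2 := by positivity
    have hB : Summable (fun n : ℕ => (1 / (a * π ^ 2)) *
        (1 / (n:ℝ) ^ 4 + |lam n| ^ 2 * (c n) ^ 2)) := by
      refine Summable.mul_left _ (Summable.add ?_ hf)
      exact Real.summable_one_div_nat_pow.mpr (by norm_num)
    refine summable_of_isBigO_nat hB ?_
    rw [Asymptotics.isBigO_iff]
    refine ⟨1, ?_⟩
    filter_upwards [eventually_ge_atTop N, eventually_ge_atTop 1] with n hn hn1
    have hnn : (1:ℝ) ≤ (n:ℝ) := by exact_mod_cast hn1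
    have hd : (0:ℝ) < a * (n:ℝ) ^ 2 * π ^ 2 := by positivity
    have hdist := hN n hn
    rw [Real.dist_eq] at hdist
    have h3 : (1:ℝ)/2 < lam n / (-(a * (n:ℝ) ^ 2 * π ^ 2)) := by
      have := abs_lt.mp hdist
      linarith [this.1]
    rw [div_neg] at h3
    have h4 : lam n < -(1/2) * (a * (n:ℝ) ^ 2 * π ^ 2) := by
      have h3' : lam n / (a * (n:ℝ) ^ 2 * π ^ 2) < -(1/2) := by linarith
      calc lam n = lam n / (a * (n:ℝ) ^ 2 * π ^ 2) * (a * (n:ℝ) ^ 2 * π ^ 2) := by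
            field_simp
        _ < -(1/2) * (a * (n:ℝ) ^ 2 * π ^ 2) := by
            exact mul_lt_mul_of_pos_right h3' hd
    have h5 : a * (n:ℝ) ^ 2 * π ^ 2 / 2 ≤ |lam n| := by
      refine le_trans ?_ (neg_le_abs (lam n))
      linarith
    -- the key bound
    have ht2 : (0:ℝ) < (n:ℝ) ^ 2 := by positivity
    have h6 : a * π ^ 2 * |c n| ≤ 2 * (|lam n| * |c n|) * (1 / (n:ℝ) ^ 2) := by
      have h7 : a * π ^ 2 ≤ 2 * |lam n| / (n:ℝ) ^ 2 := by
        rw [le_div_iff₀ ht2]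
        nlinarith
      calc a * π ^ 2 * |c n| ≤ (2 * |lam n| / (n:ℝ) ^ 2) * |c n| :=
            mul_le_mul_of_nonneg_right h7 (abs_nonneg _)
        _ = 2 * (|lam n| * |c n|) * (1 / (n:ℝ) ^ 2) := by ring
    have h8 : 2 * (|lam n| * |c n|) * (1 / (n:ℝ) ^ 2) ≤
        1 / (n:ℝ) ^ 4 + |lam n| ^ 2 * (c n) ^ 2 := by
      have key0 := two_mul_le_add_sq (|lam n| * |c n|) (1 / (n:ℝ) ^ 2)
      have habs : (|lam n| * |c n|) ^ 2 = |lam n| ^ 2 * (c n) ^ 2 := by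
        simp [mul_pow, sq_abs]
      have hfrac : (1 / (n:ℝ) ^ 2) ^ 2 = 1 / (n:ℝ) ^ 4 := by
        rw [div_pow, one_pow, ← pow_mul]
      rw [habs, hfrac] at key0
      linarith
    have key : |c n| ≤ (1 / (a * π ^ 2)) * (1 / (n:ℝ) ^ 4 + |lam n| ^ 2 * (c n) ^ 2) := by
      have h9 : a * π ^ 2 * |c n| ≤ 1 / (n:ℝ) ^ 4 + |lam n| ^ 2 * (c n) ^ 2 :=
        le_trans h6 h8
      calc |c n| = a * π ^ 2 * |c n| / (a * π ^ 2) := by field_simp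
        _ ≤ (1 / (n:ℝ) ^ 4 + |lam n| ^ 2 * (c n) ^ 2) / (a * π ^ 2) := by
            gcongr
        _ = (1 / (a * π ^ 2)) * (1 / (n:ℝ) ^ 4 + |lam n| ^ 2 * (c n) ^ 2) := by ring
    have hh : ‖|c n|‖ = |c n| := by rw [Real.norm_eq_abs, abs_abs]
    rw [hh, one_mul, Real.norm_eq_abs]
    exact le_trans key (le_abs_self _)
  -- summability part of the goal
  have hM : Summable (fun n => |c n| * C) := hsum_c.mul_right C
  have hub : ∀ n (x : ℝ), ‖c n * (γ n * Real.sin (r n * x))‖ ≤ |c n| * C := by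
    intro n x
    rw [Real.norm_eq_abs, abs_mul]
    refine mul_le_mul_of_nonneg_left ?_ (abs_nonneg _)
    rw [abs_mul, abs_of_nonneg (hγ0 n)]
    calc γ n * |Real.sin (r n * x)| ≤ γ n * 1 :=
          mul_le_mul_of_nonneg_left (Real.abs_sin_le_one _) (hγ0 n)
      _ ≤ C := by rw [mul_one]; exact hCγ n
  have goal1 : Summable (fun n : ℕ => |c n * (γ n * Real.sin (r n * 1))|) := by
    refine Summable.of_nonneg_of_le (fun n => abs_nonneg _) (fun n => ?_) hM
    simpa only [Real.norm_eq_abs, mul_one] using hub n 1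
  refine ⟨goal1, ?_⟩
  -- the limit function
  set g : ℝ → ℝ := fun x => ∑' n, c n * (γ n * Real.sin (r n * x)) with hgdef
  have hcont_terms : ∀ n, Continuous (fun x => c n * (γ n * Real.sin (r n * x))) := by
    intro n; fun_prop
  have hg_cont : Continuous g := by
    rw [hgdef]
    exact continuous_tsum hcont_terms hM hub
  have hUnif : TendstoUniformly
      (fun (t : Finset ℕ) x => ∑ n ∈ t, c n * (γ n * Real.sin (r n * x))) g atTop := by
    rw [hgdef]; exact tendstoUniformly_tsum hM hub
  have hnorm_sum : ∀ x : ℝ, Summable (fun n => ‖c n * (γ n * Real.sin (r n * x))‖) := by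
    intro x
    exact Summable.of_nonneg_of_le (fun n => norm_nonneg _) (fun n => hub n x) hM
  have hg_bdd : ∀ x, ‖g x‖ ≤ ∑' n, |c n| * C := by
    intro x
    rw [hgdef]
    refine le_trans (norm_tsum_le_tsum_norm (hnorm_sum x)) ?_
    exact Summable.tsum_le_tsum (fun n => hub n x) (hnorm_sum x) hM
  have hmem : MemLp g 2 (volume.restrict (Ioo (0:ℝ) 1)) :=
    MemLp.of_bound hg_cont.aestronglyMeasurable _ (ae_of_all _ hg_bdd)
  set G := hmem.toLp g with hGdef
  -- coeFn of partial sums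
  have hcoe : ∀ t : Finset ℕ,
      (((∑ n ∈ t, c n • (e n : Lp ℝ 2 (volume.restrict (Ioo (0:ℝ) 1)))) :
        Lp ℝ 2 (volume.restrict (Ioo (0:ℝ) 1))) : ℝ → ℝ)
        =ᵐ[volume.restrict (Ioo (0:ℝ) 1)]
      fun x => ∑ n ∈ t, c n * (γ n * Real.sin (r n * x)) := by
    intro t
    induction t using Finset.induction_on with
    | empty =>
      simp only [Finset.sum_empty]
      filter_upwards [Lp.coeFn_zero (E := ℝ) (p := 2) (μ := volume.restrict (Ioo (0:ℝ) 1))]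
        with x hx
      simpa using hx
    | @insert i s hi ih =>
      rw [Finset.sum_insert hi]
      refine (Lp.coeFn_add _ _).trans ?_
      filter_upwards [ih, Lp.coeFn_smul (c i) ((e i : Lp ℝ 2 (volume.restrict (Ioo (0:ℝ) 1)))),
        he i] with x hx1 hx2 hx3
      rw [Pi.add_apply, hx2, Finset.sum_insert hi, hx1, Pi.smul_apply, smul_eq_mul, hx3,
        hγdef]
  -- the partial sums converge to G in L2
  have hG : HasSum (fun n => c n • (e n : Lp ℝ 2 (volume.restrict (Ioo (0:ℝ) 1)))) G := by
    have : Tendsto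
        (fun t : Finset ℕ => ∑ n ∈ t, c n • (e n : Lp ℝ 2 (volume.restrict (Ioo (0:ℝ) 1))))
        atTop (nhds G) := by
      refine Metric.tendsto_nhds.mpr ?_
      intro ε hε
      filter_upwards [Metric.tendstoUniformly_iff.mp hUnif (ε/2) (half_pos hε)] with t ht
      rw [dist_eq_norm]
      have hb : ∀ᵐ x ∂(volume.restrict (Ioo (0:ℝ) 1)),
          ‖(((∑ n ∈ t, c n • (e n : Lp ℝ 2 (volume.restrict (Ioo (0:ℝ) 1)))) - G :
            Lp ℝ 2 (volume.restrict (Ioo (0:ℝ) 1))) : ℝ → ℝ) x‖ ≤ ε/2 := by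
        filter_upwards [Lp.coeFn_sub
            (∑ n ∈ t, c n • (e n : Lp ℝ 2 (volume.restrict (Ioo (0:ℝ) 1)))) G, hcoe t,
          hmem.coeFn_toLp] with x hx1 hx2 hx3
        rw [hx1, Pi.sub_apply, hx2, hx3]
        have := ht x
        rw [dist_comm, dist_eq_norm] at this
        exact this.le
      have hle := Lp.norm_le_of_ae_bound (half_pos hε).le hb
      have hμ1 : (measureUnivNNReal (volume.restrict (Ioo (0:ℝ) 1)) : ℝ) = 1 := by
        simp [measureUnivNNReal, Measure.restrict_apply_univ, h2]
      rw [hμ1, Real.one_rpow, one_mul] at hle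
      linarith
    exact this
  -- the partial sums converge to f
  have hf_sum : HasSum (fun n => c n • (e n : Lp ℝ 2 (volume.restrict (Ioo (0:ℝ) 1)))) f := by
    have h := e.hasSum_repr f
    have heq : (fun n => c n • (e n : Lp ℝ 2 (volume.restrict (Ioo (0:ℝ) 1))))
        = fun n => e.repr f n • (e n : Lp ℝ 2 (volume.restrict (Ioo (0:ℝ) 1))) := by
      funext n
      rw [hcdef, e.repr_apply_apply, real_inner_comm]
    rw [heq]
    exact h
  have hfG : f = G := hf_sum.unique hG
  have hgf : g =ᵐ[volume.restrict (Ioo (0:ℝ) 1)] F := by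
    have h1 : (f : ℝ → ℝ) =ᵐ[volume.restrict (Ioo (0:ℝ) 1)] g := by
      rw [hfG]; exact hmem.coeFn_toLp
    exact h1.symm.trans hrep
  have hres : volume.restrict (Ioo (0:ℝ) 1) = volume.restrict (Icc (0:ℝ) 1) :=
    Measure.restrict_congr_set Ioo_ae_eq_Icc
  have hEq : EqOn g F (Icc (0:ℝ) 1) := by
    refine Measure.eqOn_Icc_of_ae_eq volume (by norm_num : (0:ℝ) ≠ 1) ?_
      hg_cont.continuousOn hF
    rw [← hres]; exact hgf
  have h1mem : (1:ℝ) ∈ Icc (0:ℝ) 1 := by norm_num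
  exact hEq h1mem
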